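/- If X is a nonempty compact Hausdorff space that has a π-base of cardinality at most ℵ₁, then X has a point that does not belong to any nowhere dense P-set of X. -/

import Mathlib

open Cardinal Set

/-- A subset `B` of a topological space is a P-set if the intersection of countably many
neighborhoods of `B` is again a neighborhood of `B`. -/
def IsPSet {X : Type*} [TopologicalSpace X] (B : Set X) : Prop :=
  ∀ U : ℕ → Set X, (∀ n, IsOpen (U n) ∧ B ⊆ U n) →
    ∃ V : Set X, IsOpen V ∧ B ⊆ V ∧ V ⊆ ⋂ n, U n

noncomputable instance : IsWellOrder ((Cardinal.aleph 1 : Cardinal.{v}).ord.ToType) (· < ·) :=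
  isWellOrder_lt

/-- Initial segments of the canonical well-order of type `ω₁` are countable. -/
theorem omega1_countable_Iio (i : (Cardinal.aleph 1 : Cardinal.{v}).ord.ToType) :
    (Set.Iio i).Countable := by
  rw [Cardinal.countable_iff_lt_aleph_one]
  exact Cardinal.mk_Iio_toType_ord_lt i

/-- Countable subsets of the canonical well-order of type `ω₁` are strictly bounded. -/
theorem omega1_bound (s : Set ((Cardinal.aleph 1 : Cardinal.{v}).ord.ToType))
    (hs : s.Countable) : ∃ j, ∀ x ∈ s, x < j := by
  haveI := hs.to_subtype
  have hlim : Order.IsSuccLimit ((Cardinal.aleph 1 : Cardinal.{v}).ord) :=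
    Cardinal.isSuccLimit_ord Cardinal.aleph0_lt_aleph_one.le
  have hoy : ∀ y : ↥s, Order.succ (Ordinal.typein
      (α := (Cardinal.aleph 1 : Cardinal.{v}).ord.ToType) (· < ·) y.1) <
      (Cardinal.aleph 1 : Cardinal.{v}).ord :=
    fun y => hlim.succ_lt (Ordinal.typein_lt_self y.1)
  have hsup := Ordinal.iSup_lt_omega_one (by rw [← Cardinal.ord_aleph]; exact hoy)
  have hsup' : (⨆ y : ↥s, Order.succ (Ordinal.typein
      (α := (Cardinal.aleph 1 : Cardinal.{v}).ord.ToType) (· < ·) y.1)) <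
      Ordinal.type (α := (Cardinal.aleph 1 : Cardinal.{v}).ord.ToType) (· < ·) := by
    rw [Ordinal.type_toType]; rw [← Cardinal.ord_aleph] at hsup; exact hsup
  refine ⟨Ordinal.enum (α := (Cardinal.aleph 1 : Cardinal.{v}).ord.ToType) (· < ·) ⟨_, hsup'⟩,
    fun x hx => ?_⟩
  have h1 : Ordinal.typein (α := (Cardinal.aleph 1 : Cardinal.{v}).ord.ToType) (· < ·) x <
      ⨆ y : ↥s, Order.succ (Ordinal.typein
        (α := (Cardinal.aleph 1 : Cardinal.{v}).ord.ToType) (· < ·) y.1) :=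
    lt_of_lt_of_le (Order.lt_succ _) (Ordinal.le_iSup _ (⟨x, hx⟩ : ↥s))
  have h2 := Ordinal.typein_enum
    (α := (Cardinal.aleph 1 : Cardinal.{v}).ord.ToType) (· < ·) hsup'
  exact (Ordinal.typein_lt_typein
    (α := (Cardinal.aleph 1 : Cardinal.{v}).ord.ToType) (· < ·)).mp (by rw [h2]; exact h1)

/-- Auxiliary result: the theorem with an abstract well-ordered index type for the π-base,
all of whose initial segments are countable and whose countable subsets are bounded. -/
theorem point_avoiding_nwd_Psets_aux {X : Type*} [TopologicalSpace X]
    [CompactSpace X] [T2Space X] [Nonempty X]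
    {ι : Type*} [LinearOrder ι] [Nonempty ι] [WellFoundedLT ι]
    (countable_Iio : ∀ i : ι, (Set.Iio i).Countable)
    (bound : ∀ s : Set ι, s.Countable → ∃ j : ι, ∀ x ∈ s, x < j)
    (b : ι → Set X) (hbopen : ∀ i, IsOpen (b i)) (hbne : ∀ i, (b i).Nonempty)
    (hbase : ∀ U : Set X, IsOpen U → U.Nonempty → ∃ i, b i ⊆ U) :
    ∃ x : X, ∀ B : Set X, IsNowhereDense B → IsPSet B → x ∉ B := by
  classical
  -- from regularity: inside every nonempty open set there is a π-base element whose
  -- closure is inside it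
  have shrink : ∀ U : Set X, IsOpen U → U.Nonempty → ∃ i, closure (b i) ⊆ U := by
    rintro U hU ⟨z, hz⟩
    obtain ⟨V, hVz, hVcl, hVU⟩ := exists_mem_nhds_isClosed_subset (hU.mem_nhds hz)
    have hWne : (interior V).Nonempty := ⟨z, mem_interior_iff_mem_nhds.2 hVz⟩
    obtain ⟨i, hi⟩ := hbase _ isOpen_interior hWne
    refine ⟨i, ?_⟩
    calc closure (b i) ⊆ closure (interior V) := closure_mono hi
    _ ⊆ V := closure_minimal interior_subset hVcl
    _ ⊆ U := hVU
  -- ...and moreover one whose closure avoids any fixed nowhere dense set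
  have shrinkA : ∀ (γ : ι) (K : Set X), IsNowhereDense K →
      ∃ j, closure (b j) ⊆ b γ ∧ closure (b j) ∩ K = ∅ := by
    intro γ K hK
    have hne : (b γ \ closure K).Nonempty := by
      rw [Set.nonempty_iff_ne_empty]
      intro h
      have h1 : b γ ⊆ closure K := diff_eq_empty.mp h
      have h2 : b γ ⊆ interior (closure K) := interior_maximal h1 (hbopen γ)
      rw [hK] at h2
      exact (hbne γ).ne_empty (Set.subset_empty_iff.mp h2)
    obtain ⟨j, hj⟩ := shrink _ ((hbopen γ).sdiff isClosed_closure) hne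
    refine ⟨j, hj.trans diff_subset, ?_⟩
    rw [Set.eq_empty_iff_forall_notMem]
    rintro y ⟨hy1, hy2⟩
    exact (hj hy1).2 (subset_closure hy2)
  -- the family of constraints: pairs (δ, v) with v ⊆ Iio δ "δ-dense"
  let Good : ι → Set ι → Prop := fun δ v =>
    (∃ γ, γ < δ) ∧ (∀ α ∈ v, α < δ) ∧ (∀ γ, γ < δ → ∃ α ∈ v, closure (b α) ⊆ b γ)
  let J := {p : ι × Set ι // Good p.1 p.2}
  let T : J → Set X := fun p => closure (⋃ α ∈ p.1.2, b α)
  have hTclosed : ∀ p, IsClosed (T p) := fun _ => isClosed_closure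
  -- finite intersection property, by chaining witnesses through pairs sorted by δ
  have key : ∀ (u : Finset J) (γ : ι), (∀ p ∈ u, γ < p.1.1) →
      ∃ i, closure (b i) ⊆ b γ ∧ ∀ p ∈ u, b i ⊆ ⋃ α ∈ p.1.2, b α := by
    intro u
    induction u using Finset.strongInduction with
    | _ u IH =>
      intro γ hγ
      rcases u.eq_empty_or_nonempty with rfl | hne
      · obtain ⟨i, hi⟩ := shrink (b γ) (hbopen γ) (hbne γ)
        exact ⟨i, hi, by simp⟩
      · obtain ⟨q, hq, hqmin⟩ := u.exists_min_image (fun p => p.1.1) hne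
        obtain ⟨α₁, hα₁v, hα₁cl⟩ := q.2.2.2 γ (hγ q hq)
        have hα₁lt : α₁ < q.1.1 := q.2.2.1 α₁ hα₁v
        obtain ⟨i, hicl, hiall⟩ := IH (u.erase q) (Finset.erase_ssubset hq) α₁
          (fun p hp => lt_of_lt_of_le hα₁lt (hqmin p (Finset.mem_of_mem_erase hp)))
        refine ⟨i, hicl.trans (subset_closure.trans hα₁cl), ?_⟩
        intro p hp
        by_cases hpq : p = q
        · subst hpq
          exact (subset_closure.trans hicl).trans
            (Set.subset_biUnion_of_mem (u := fun α => b α) hα₁v)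
        · exact hiall p (Finset.mem_erase.mpr ⟨hpq, hp⟩)
  -- compactness: a point in all the constraint sets
  have hx : (⋂ p : J, T p).Nonempty := by
    by_contra hcon
    rw [Set.not_nonempty_iff_eq_empty] at hcon
    obtain ⟨u, hu⟩ := isCompact_univ.elim_finite_subfamily_closed T hTclosed
      (by rw [Set.univ_inter]; exact hcon)
    have hmle : ∀ p ∈ u, (wellFounded_lt (α := ι)).min Set.univ
        ⟨Classical.arbitrary ι, trivial⟩ < p.1.1 := by
      intro p hp
      obtain ⟨γ, hγ⟩ := p.2.1
      refine lt_of_le_of_lt ?_ hγ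
      by_contra hlt
      exact (wellFounded_lt (α := ι)).not_lt_min Set.univ (Set.mem_univ γ)
        (lt_of_not_ge hlt)
    obtain ⟨i, -, hi⟩ := key u _ hmle
    obtain ⟨y, hy⟩ := hbne i
    have hyin : y ∈ Set.univ ∩ ⋂ p ∈ u, T p := by
      refine ⟨trivial, ?_⟩
      rw [Set.mem_iInter₂]
      intro p hp
      exact subset_closure (hi p hp hy)
    rw [hu] at hyin
    exact hyin
  obtain ⟨x, hx⟩ := hx
  refine ⟨x, ?_⟩
  intro K hKnwd hKP hxK
  -- choose K-avoiding shrinkings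
  choose h hh1 hh2 using fun γ : ι => shrinkA γ K hKnwd
  -- a "closure point" δ for h
  have gbound : ∀ i : ι, ∃ j : ι, ∀ x ∈ (h '' Set.Iio i) ∪ {i}, x < j := fun i =>
    bound _ (((countable_Iio i).image h).union (Set.countable_singleton i))
  choose g hg using gbound
  have hself : ∀ i : ι, i < g i := fun i => hg i i (Or.inr rfl)
  have himg : ∀ i : ι, ∀ γ : ι, γ < i → h γ < g i := fun i γ hγ =>
    hg i (h γ) (Or.inl ⟨γ, hγ, rfl⟩)
  set it : ℕ → ι := fun n => g^[n + 1] (Classical.arbitrary ι) with hitdef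
  have hit_succ : ∀ n, it (n + 1) = g (it n) := by
    intro n
    simp only [hitdef]
    rw [Function.iterate_succ_apply']
  have hit_mono : ∀ n, it n < it (n + 1) := fun n => by rw [hit_succ]; exact hself _
  obtain ⟨ub, hub⟩ := bound (Set.range it) (Set.countable_range it)
  have hUBne : ({j : ι | ∀ n, it n < j} : Set ι).Nonempty :=
    ⟨ub, fun n => hub _ (Set.mem_range_self n)⟩
  set δ := (wellFounded_lt (α := ι)).min {j : ι | ∀ n, it n < j} hUBne with hδdef
  have hδUB : ∀ n, it n < δ := (wellFounded_lt (α := ι)).min_mem _ hUBne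
  have hδleast : ∀ j, j < δ → ∃ n, j ≤ it n := by
    intro j hj
    by_contra hcon
    push_neg at hcon
    exact (wellFounded_lt (α := ι)).not_lt_min {j : ι | ∀ n, it n < j} (fun n => hcon n) hj
  have hhδ : ∀ γ, γ < δ → h γ < δ := by
    intro γ hγ
    obtain ⟨n, hn⟩ := hδleast γ hγ
    have hγlt : γ < it (n + 1) := lt_of_le_of_lt hn (hit_mono n)
    have h2 : h γ < g (it (n + 1)) := himg _ _ hγlt
    rw [← hit_succ] at h2
    exact lt_trans h2 (hδUB (n + 2))
  have hmδ : ∃ γ, γ < δ := ⟨it 0, hδUB 0⟩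
  -- the countable dense K-avoiding witness family
  set v : Set ι := h '' Set.Iio δ with hvdef
  have hvδ : ∀ α ∈ v, α < δ := by
    rintro α ⟨γ, hγ, rfl⟩
    exact hhδ γ hγ
  have hvdense : ∀ γ, γ < δ → ∃ α ∈ v, closure (b α) ⊆ b γ := fun γ hγ =>
    ⟨h γ, ⟨γ, hγ, rfl⟩, hh1 γ⟩
  have hxT : x ∈ closure (⋃ α ∈ v, b α) :=
    Set.mem_iInter.mp hx (⟨(δ, v), hmδ, hvδ, hvdense⟩ : J)
  -- v is countable and nonempty; enumerate it
  have hvc : v.Countable := (countable_Iio δ).image h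
  have hvne : v.Nonempty := by
    obtain ⟨γ, hγ⟩ := hmδ
    exact ⟨h γ, ⟨γ, hγ, rfl⟩⟩
  obtain ⟨e, he⟩ := hvc.exists_eq_range hvne
  -- apply the P-set property of K to the complements of the closures
  have hKfar : ∀ α ∈ v, closure (b α) ∩ K = ∅ := by
    rintro α ⟨γ, hγ, rfl⟩
    exact hh2 γ
  obtain ⟨V, hVopen, hKV, hVsub⟩ := hKP (fun n => (closure (b (e n)))ᶜ) (by
    intro n
    refine ⟨isClosed_closure.isOpen_compl, ?_⟩
    intro z hz
    have hen : e n ∈ v := by rw [he]; exact Set.mem_range_self n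
    have hfar := hKfar _ hen
    rw [Set.eq_empty_iff_forall_notMem] at hfar
    intro hzc
    exact hfar z ⟨hzc, hz⟩)
  -- contradiction: V is an open neighborhood of x missing ⋃ α ∈ v, b α
  rw [mem_closure_iff] at hxT
  obtain ⟨y, hyV, hyU⟩ := hxT V hVopen (hKV hxK)
  simp only [Set.mem_iUnion] at hyU
  obtain ⟨α, hαv, hyb⟩ := hyU
  have hαe : α ∈ Set.range e := by rw [← he]; exact hαv
  obtain ⟨n, rfl⟩ := hαe
  have hyc : y ∈ (closure (b (e n)))ᶜ := Set.mem_iInter.mp (hVsub hyV) n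
  exact hyc (subset_closure hyb)

/-- If a nonempty compact Hausdorff space has a π-base of cardinality at most ℵ₁, then it
has a point that does not belong to any nowhere dense P-set. -/
theorem point_avoiding_nwd_Psets_of_small_pi_base (X : Type*) [TopologicalSpace X]
    [CompactSpace X] [T2Space X] [Nonempty X] (𝔅 : Set (Set X))
    (hopen : ∀ B ∈ 𝔅, IsOpen B ∧ B.Nonempty)
    (hbase : ∀ U : Set X, IsOpen U → U.Nonempty → ∃ B ∈ 𝔅, B ⊆ U)
    (hcard : Cardinal.mk 𝔅 ≤ Cardinal.aleph 1) :
    ∃ x : X, ∀ B : Set X, IsNowhereDense B → IsPSet B → x ∉ B := by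
  classical
  obtain ⟨B₀, hB₀, -⟩ := hbase Set.univ isOpen_univ ⟨Classical.arbitrary X, trivial⟩
  haveI h𝔅ne : Nonempty ↥𝔅 := ⟨⟨B₀, hB₀⟩⟩
  have hle : #↥𝔅 ≤ #((Cardinal.aleph 1).ord.ToType) := by
    rw [Cardinal.mk_ord_toType]; exact hcard
  obtain ⟨emb⟩ := (Cardinal.le_def _ _).mp hle
  haveI hιne : Nonempty _ := ⟨emb (Classical.arbitrary ↥𝔅)⟩
  have hfsurj : Function.Surjective (Function.invFun emb) :=
    Function.invFun_surjective emb.injective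
  refine point_avoiding_nwd_Psets_aux omega1_countable_Iio omega1_bound
    (fun i => ((Function.invFun emb i : ↥𝔅) : Set X))
    (fun i => (hopen _ (Function.invFun emb i).2).1)
    (fun i => (hopen _ (Function.invFun emb i).2).2)
    (fun U hU hUne => ?_)
  obtain ⟨B, hB, hBU⟩ := hbase U hU hUne
  obtain ⟨i, hi⟩ := hfsurj ⟨B, hB⟩
  refine ⟨i, ?_⟩
  show ((Function.invFun emb i : ↥𝔅) : Set X) ⊆ U
  rw [hi]
  exact hBU
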